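/- arXiv:2602.21185 — 3 statements merged into one kernel-verified Lean document; each statement's English description precedes it below -/
import Mathlib

section
/- Consider a discretized process with times t(0) < t(1) < ⋯ < t(T) = 1 where the terminal marginal Ψ_1(· | x) = q_1(· | x) and each reverse transition is the superposition Ψ_{s|t}(· | x, z) = κ_t q_{s|t}(· | z, x) + (1 − κ_t) q_s(· | x) with q_{s|t} the Bayes posterior of a marginal-consistent forward process. Then by induction, the induced marginal at every time t(i) equals the forward marginal: Ψ_{t(i)}(· | x) = q_{t(i)}(· | x). -/
open Finset Set

/-- Downward induction: if the terminal marginal of the `Ψ`-process matches the forward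
marginal and each reverse transition is a superposition of the Bayes posterior and the
forward marginal, then the `Ψ`-marginals equal the forward marginals at every time. -/
theorem psi_marginals_eq_forward_marginals
    {V : Type*} [Fintype V] (T : ℕ)
    (q : ℕ → V → V → ℝ) (B : ℕ → V → V → V → ℝ) (κ : ℕ → ℝ)
    (hκ : ∀ i, κ i ∈ Icc (0 : ℝ) 1)
    (hqsum : ∀ i, i ≤ T → ∀ x, ∑ z, q i z x = 1)
    (hBayes : ∀ i, 1 ≤ i → i ≤ T → ∀ w x, ∑ z, q i z x * B i w z x = q (i - 1) w x)
    (Ψ : ℕ → V → V → ℝ)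
    (hΨT : ∀ w x, Ψ T w x = q T w x)
    (hrec : ∀ i, i < T → ∀ w x,
      Ψ i w x = ∑ z, Ψ (i + 1) z x * (κ (i + 1) * B (i + 1) w z x + (1 - κ (i + 1)) * q i w x)) :
    ∀ i, i ≤ T → ∀ w x, Ψ i w x = q i w x := by
  have key : ∀ d, d ≤ T → ∀ w x, Ψ (T - d) w x = q (T - d) w x := by
    intro d
    induction d with
    | zero => simpa using hΨT
    | succ d ih =>
      intro hd w x
      have hd' : d ≤ T := Nat.le_of_succ_le hd
      have hlt : T - (d + 1) < T := by omega
      have hsucc : T - (d + 1) + 1 = T - d := by omega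
      rw [hrec _ hlt]
      have hIH : ∀ z, Ψ (T - (d + 1) + 1) z x = q (T - (d + 1) + 1) z x := by
        intro z; rw [hsucc]; exact ih hd' z x
      calc ∑ z, Ψ (T - (d + 1) + 1) z x *
            (κ (T - (d + 1) + 1) * B (T - (d + 1) + 1) w z x +
              (1 - κ (T - (d + 1) + 1)) * q (T - (d + 1)) w x)
          = κ (T - (d + 1) + 1) * ∑ z, q (T - (d + 1) + 1) z x * B (T - (d + 1) + 1) w z x +
            (1 - κ (T - (d + 1) + 1)) * q (T - (d + 1)) w x * ∑ z, q (T - (d + 1) + 1) z x := by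
            simp only [hIH, Finset.mul_sum, Finset.sum_mul, ← Finset.sum_add_distrib]
            congr 1; ext z; ring
        _ = q (T - (d + 1)) w x := by
            rw [hBayes _ (by omega) (by omega), hqsum _ (by omega)]
            have : T - (d + 1) + 1 - 1 = T - (d + 1) := by omega
            rw [this]; ring
  intro i hi w x
  have : T - (T - i) = i := by omega
  rw [← this]
  exact key (T - i) (by omega) w x
end

section
/- Let π = m be a fixed one-hot 'mask' vector and define the MDM posterior q^{MDM}_{s|t}(· | z, x) equal to Cat(·; ((α_s − α_t)/(1 − α_t)) x + ((1 − α_s)/(1 − α_t)) z) when z = m and Cat(·; x) otherwise, where 0 < α_t < α_s ≤ 1. Then the superposition posterior Ψ_{s|t}(· | z) = κ_t q^{MDM}_{s|t}(· | z, x) + (1 − κ_t)[α_s x + (1 − α_s) m], with κ_t = 1 − σ_t/(1 − α_s), equals the ReMDM posterior: Cat(·; (1 − σ_t) x + σ_t m) when z ≠ m, and Cat(·; ((α_s − (1−σ_t)α_t)/(1 − α_t)) x + ((1 − α_s − σ_t α_t)/(1 − α_t)) m) when z = m. -/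
open Set

/-- With `κ_t = 1 - σ_t / (1 - α_s)`, the superposition of the MDM posterior with the
forward marginal `α_s x + (1 - α_s) m` equals the ReMDM posterior. -/
theorem superposition_eq_remdm
    {Kv : ℕ} (x m z : Fin Kv → ℝ)
    (hx : ∃ a, x = fun j => if j = a then (1 : ℝ) else 0)
    (hm : ∃ a, m = fun j => if j = a then (1 : ℝ) else 0)
    (hxm : x ≠ m) (hz : z = x ∨ z = m)
    (αs αt σ : ℝ) (hαt : αt ∈ Ioo (0 : ℝ) 1) (hαs : αs ∈ Ioo (0 : ℝ) 1) (hlt : αt < αs)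
    (hσ : σ ∈ Icc (0 : ℝ) (min 1 ((1 - αs) / αt))) :
    let κ : ℝ := 1 - σ / (1 - αs)
    let qMDM : Fin Kv → ℝ :=
      if z = m then
        (fun j => ((αs - αt) / (1 - αt)) * x j + ((1 - αs) / (1 - αt)) * m j)
      else x
    let Ψ : Fin Kv → ℝ := fun j => κ * qMDM j + (1 - κ) * (αs * x j + (1 - αs) * m j)
    (z ≠ m → ∀ j, Ψ j = (1 - σ) * x j + σ * m j) ∧
    (z = m → ∀ j,
      Ψ j = ((αs - (1 - σ) * αt) / (1 - αt)) * x j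
            + ((1 - αs - σ * αt) / (1 - αt)) * m j) := by
  intro κ qMDM Ψ
  have hs : (1 : ℝ) - αs ≠ 0 := by have := hαs.2; linarith
  have ht : (1 : ℝ) - αt ≠ 0 := by have := hαt.2; linarith
  constructor
  · intro hne j
    simp only [Ψ, qMDM, κ, if_neg hne]
    field_simp
    ring
  · intro he j
    simp only [Ψ, qMDM, κ, if_pos he]
    field_simp
    ring
end

section
/- In the masked-diffusion setting with 0 < α_t < α_s ≤ 1, the ReMDM remasking probability σ_t yields a valid probability distribution (all mixture coefficients in the ReMDM posterior are nonnegative and sum to one) if and only if 0 ≤ σ_t ≤ min{1, (1 − α_s)/α_t}. -/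
/-- The ReMDM posterior is a valid probability distribution (all mixture coefficients
nonnegative and summing to one, in both the `z ≠ m` and `z = m` cases) if and only if
`0 ≤ σ_t ≤ min 1 ((1 - α_s) / α_t)`. -/
theorem remdm_valid_iff (αs αt σ : ℝ) (h1 : 0 < αt) (h2 : αt < αs) (h3 : αs < 1) :
    (0 ≤ 1 - σ ∧ 0 ≤ σ ∧ (1 - σ) + σ = 1 ∧
      0 ≤ (αs - (1 - σ) * αt) / (1 - αt) ∧
      0 ≤ (1 - αs - σ * αt) / (1 - αt) ∧
      (αs - (1 - σ) * αt) / (1 - αt) + (1 - αs - σ * αt) / (1 - αt) = 1)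
    ↔ (0 ≤ σ ∧ σ ≤ min 1 ((1 - αs) / αt)) := by
  have ht : 0 < 1 - αt := by linarith
  constructor
  · rintro ⟨a, b, -, -, c, -⟩
    refine ⟨b, le_min (by linarith) ?_⟩
    rw [le_div_iff₀ h1]
    have := (div_nonneg_iff.mp c).resolve_right (fun h => absurd h.2 (by linarith))
    linarith [this.1]
  · rintro ⟨b, c⟩
    have c1 : σ ≤ 1 := le_trans c (min_le_left _ _)
    have c2 : σ * αt ≤ 1 - αs := by
      have := le_trans c (min_le_right _ _)
      rw [le_div_iff₀ h1] at this; linarith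
    refine ⟨by linarith, b, by ring, div_nonneg (by nlinarith) ht.le,
      div_nonneg (by linarith) ht.le, ?_⟩
    field_simp
    ring
end
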